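/- Let A ∈ Z^{d×n} with ZA = Z^d, c ∈ R^n, and suppose c is generic in the sense that for every b ∈ NA the integer program min{c·x : Ax = b, x ∈ N^n} has a unique optimal solution. Then for every b ∈ cone(A) the linear program min{c·x : Ax = b, x ≥ 0} has a unique optimal solution, and consequently Δ_c is a triangulation: the columns indexed by every cell of Δ_c are linearly independent. -/

import Mathlib

def feas {d n : ℕ} (A : Matrix (Fin d) (Fin n) ℤ) (b : Fin d → ℝ) (x : Fin n → ℝ) : Prop :=
  (∀ j, 0 ≤ x j) ∧ ∀ i, ∑ j, (A i j : ℝ) * x j = b i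

def lpOpt {d n : ℕ} (A : Matrix (Fin d) (Fin n) ℤ) (c : Fin n → ℝ) (b : Fin d → ℝ)
    (x : Fin n → ℝ) : Prop :=
  feas A b x ∧ ∀ y, feas A b y → ∑ j, c j * x j ≤ ∑ j, c j * y j

/-- u is an optimal solution of IP_{A,c}(b). -/
def intOpt {d n : ℕ} (A : Matrix (Fin d) (Fin n) ℤ) (c : Fin n → ℝ) (b : Fin d → ℤ)
    (u : Fin n → ℕ) : Prop :=
  (∀ i, ∑ j, A i j * (u j : ℤ) = b i) ∧
    ∀ u' : Fin n → ℕ, (∀ i, ∑ j, A i j * (u' j : ℤ) = b i) →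
      ∑ j, c j * (u j : ℝ) ≤ ∑ j, c j * (u' j : ℝ)

def isCell {d n : ℕ} (A : Matrix (Fin d) (Fin n) ℤ) (c : Fin n → ℝ) (σ : Finset (Fin n)) : Prop :=
  ∃ z : Fin d → ℝ, (∀ j ∈ σ, ∑ i, z i * (A i j : ℝ) = c j) ∧
    ∀ j ∉ σ, ∑ i, z i * (A i j : ℝ) < c j


open Finset

lemma qdep {d n : ℕ} (A : Matrix (Fin d) (Fin n) ℤ) (w : Fin n → ℝ) (hw : w ≠ 0)
    (hker : ∀ i, ∑ j, (A i j : ℝ) * w j = 0) :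
    ∃ v : Fin n → ℤ, v ≠ 0 ∧ (∀ i, ∑ j, A i j * v j = 0) ∧ ∀ j, v j ≠ 0 → w j ≠ 0 := by
  classical
  set M : Matrix (Fin d ⊕ Fin n) (Fin n) ℚ :=
    Matrix.of (Sum.elim (fun i j => (A i j : ℚ))
      (fun k j => if w k = 0 ∧ k = j then 1 else 0)) with hMdef
  by_cases hinj : LinearMap.ker (Matrix.toLin' M) = ⊥
  · -- injective case: derive contradiction with w ≠ 0
    exfalso
    obtain ⟨g, hg⟩ := LinearMap.exists_leftInverse_of_injective _ hinj
    set G := LinearMap.toMatrix' g with hGdef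
    have hGM : G * M = 1 := by
      have := congrArg LinearMap.toMatrix' hg
      rwa [LinearMap.toMatrix'_comp, LinearMap.toMatrix'_toLin', LinearMap.toMatrix'_id] at this
    set φ := (Rat.castHom ℝ)
    have hGMr : (G.map φ) * (M.map φ) = 1 := by
      rw [← Matrix.map_mul, hGM, Matrix.map_one _ (map_zero φ) (map_one φ)]
    have hMw : (M.map φ).mulVec w = 0 := by
      funext x
      cases x with
      | inl i =>
        simpa [Matrix.mulVec, dotProduct, M, Matrix.map] using hker i
      | inr k =>
        by_cases hwk : w k = 0
        · simp [Matrix.mulVec, dotProduct, M, Matrix.map, hwk, ite_and,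
            apply_ite (fun q : ℚ => (q:ℝ)), Finset.sum_ite_eq]
        · simp [Matrix.mulVec, dotProduct, M, Matrix.map, hwk]
    have : w = 0 := by
      calc w = (1 : Matrix (Fin n) (Fin n) ℝ).mulVec w := (Matrix.one_mulVec w).symm
      _ = ((G.map φ) * (M.map φ)).mulVec w := by rw [hGMr]
      _ = (G.map φ).mulVec ((M.map φ).mulVec w) := by rw [Matrix.mulVec_mulVec]
      _ = 0 := by rw [hMw, Matrix.mulVec_zero]
    exact hw this
  · -- noninjective: rational kernel vector, clear denominators
    obtain ⟨u, hu_mem, hu0⟩ := Submodule.exists_mem_ne_zero_of_ne_bot hinj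
    have hMu : M.mulVec u = 0 := by
      have : Matrix.toLin' M u = 0 := hu_mem
      simpa [Matrix.toLin'_apply] using this
    -- support of u
    have hsupp : ∀ j, u j ≠ 0 → w j ≠ 0 := by
      intro j huj hwj
      have := congrFun hMu (Sum.inr j)
      simp [Matrix.mulVec, dotProduct, M, hwj, ite_and, Finset.sum_ite_eq] at this
      exact huj this
    set N : ℤ := ∏ j, ((u j).den : ℤ) with hNdef
    have hNpos : 0 < N := Finset.prod_pos (fun j _ => by exact_mod_cast (u j).den_pos)
    have hcast : ∀ j, (((u j).num * (N / ((u j).den : ℤ)) : ℤ) : ℚ) = u j * N := by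
      intro j
      obtain ⟨t, ht⟩ : ((u j).den : ℤ) ∣ N := Finset.dvd_prod_of_mem _ (mem_univ j)
      have hden : ((u j).den : ℤ) ≠ 0 := by exact_mod_cast (u j).den_pos.ne'
      rw [ht, Int.mul_ediv_cancel_left _ hden]
      push_cast
      rw [show (u j) * (((u j).den:ℚ) * (t:ℚ)) = ((u j) * (u j).den) * t by ring,
        Rat.mul_den_eq_num]
    refine ⟨fun j => (u j).num * (N / ((u j).den : ℤ)), ?_, ?_, ?_⟩
    · obtain ⟨j, hj⟩ := Function.ne_iff.mp hu0
      intro hcon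
      have h0 := congrFun hcon j
      simp only [Pi.zero_apply] at h0
      have hmul : u j * N = 0 := by rw [← hcast j, h0]; norm_num
      have hN0 : (N:ℚ) ≠ 0 := by exact_mod_cast hNpos.ne'
      exact hj ((mul_eq_zero.mp hmul).resolve_right hN0)
    · intro i
      have hrow := congrFun hMu (Sum.inl i)
      simp only [Matrix.mulVec, dotProduct, M, Matrix.of_apply, Sum.elim_inl,
        Pi.zero_apply] at hrow
      have : ∑ j, (A i j : ℚ) * ((((u j).num * (N / ((u j).den : ℤ)) : ℤ)) : ℚ) = 0 := by
        calc ∑ j, (A i j : ℚ) * ((((u j).num * (N / ((u j).den : ℤ)) : ℤ)) : ℚ)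
            = ∑ j, ((A i j : ℚ) * u j) * N := by
              refine Finset.sum_congr rfl ?_
              intro j _
              rw [hcast j]; ring
        _ = (∑ j, (A i j : ℚ) * u j) * N := by rw [Finset.sum_mul]
        _ = 0 := by rw [hrow, zero_mul]
      exact_mod_cast this
    · intro j hvj
      apply hsupp j
      intro huj
      exact hvj (by simp [huj])


section
variable {d n : ℕ} (A : Matrix (Fin d) (Fin n) ℤ) (c : Fin n → ℝ)

variable (hgen : ∀ u0 : Fin n → ℕ,
      ∃! u : Fin n → ℕ, intOpt A c (fun i => ∑ j, A i j * (u0 j : ℤ)) u)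

include hgen

lemma stepA (v : Fin n → ℕ) (hker : ∀ i, ∑ j, A i j * (v j : ℤ) = 0)
    (hc : (∑ j, c j * (v j : ℝ)) ≤ 0) : v = 0 := by
  obtain ⟨u, hu, huniq⟩ := hgen 0
  have hb0 : ∀ i, (∑ j, A i j * (((0 : Fin n → ℕ) j) : ℤ)) = 0 := by intro i; simp
  -- every kernel-feasible v' has nonnegative cost
  have hnonneg : ∀ v' : Fin n → ℕ, (∀ i, ∑ j, A i j * (v' j : ℤ) = 0) →
      0 ≤ ∑ j, c j * (v' j : ℝ) := by
    intro v' hv'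
    by_contra hneg
    push_neg at hneg
    obtain ⟨k, hk⟩ := exists_nat_gt ((∑ j, c j * (u j : ℝ)) / (∑ j, c j * (v' j : ℝ)))
    have hfk : ∀ i, ∑ j, A i j * (((fun j => k * v' j) j : ℕ) : ℤ) = (fun i => ∑ j, A i j * (((0 : Fin n → ℕ) j) : ℤ)) i := by
      intro i
      simp only [hb0]
      push_cast
      calc ∑ j, A i j * ((k:ℤ) * (v' j:ℤ)) = (k:ℤ) * ∑ j, A i j * (v' j : ℤ) := by
            rw [Finset.mul_sum]; exact Finset.sum_congr rfl fun j _ => by ring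
      _ = 0 := by rw [hv' i, mul_zero]
    have hle := hu.2 _ hfk
    have hcast : ∑ j, c j * (((k * v' j : ℕ)) : ℝ) = (k:ℝ) * ∑ j, c j * (v' j : ℝ) := by
      rw [Finset.mul_sum]
      exact Finset.sum_congr rfl fun j _ => by push_cast; ring
    rw [hcast] at hle
    have := (div_lt_iff_of_neg hneg).mp hk
    linarith
  -- optimal value is 0, and 0 is optimal
  have hu_le : ∑ j, c j * (u j : ℝ) ≤ 0 := by
    have := hu.2 0 (by intro i; simp)
    simpa using this
  have hu_eq : ∑ j, c j * (u j : ℝ) = 0 := le_antisymm hu_le (hnonneg u (by intro i; rw [hu.1 i]; exact hb0 i))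
  have h0opt : intOpt A c (fun i => ∑ j, A i j * (((0 : Fin n → ℕ) j) : ℤ)) 0 := by
    constructor
    · intro i; simp
    · intro u' hu'
      simp only [Pi.zero_apply, Nat.cast_zero, mul_zero, Finset.sum_const_zero]
      exact hnonneg u' (by intro i; rw [hu' i]; exact hb0 i)
  have h0u : (0 : Fin n → ℕ) = u := huniq 0 h0opt
  -- v is optimal
  have hveq : ∑ j, c j * (v j : ℝ) = 0 := le_antisymm hc (hnonneg v hker)
  have hvopt : intOpt A c (fun i => ∑ j, A i j * (((0 : Fin n → ℕ) j) : ℤ)) v := by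
    constructor
    · intro i; rw [hker i]; exact (hb0 i).symm
    · intro u' hu'
      rw [hveq]
      exact hnonneg u' (by intro i; rw [hu' i]; exact hb0 i)
  have := huniq v hvopt
  rw [this, ← h0u]

lemma lemL1 (v : Fin n → ℤ) (hv : v ≠ 0) (hker : ∀ i, ∑ j, A i j * v j = 0) :
    ∃ t : Fin n → ℤ, (∀ i, ∑ j, A i j * t j = 0) ∧ (∑ j, c j * (t j : ℝ)) < 0 ∧
      ∀ j, t j < 0 → v j ≠ 0 := by
  set vp : Fin n → ℕ := fun j => (v j).toNat with hvp
  set vm : Fin n → ℕ := fun j => (-(v j)).toNat with hvm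
  have hsplit : ∀ j, (vp j : ℤ) - (vm j : ℤ) = v j := by intro j; simp only [hvp, hvm]; omega
  set b : Fin d → ℤ := fun i => ∑ j, A i j * ((vp j : ℕ) : ℤ) with hbdef
  have hbm : ∀ i, ∑ j, A i j * ((vm j : ℕ) : ℤ) = b i := by
    intro i
    have : ∑ j, (A i j * (vp j : ℤ) - A i j * (vm j : ℤ)) = 0 := by
      calc ∑ j, (A i j * (vp j : ℤ) - A i j * (vm j : ℤ)) = ∑ j, A i j * v j := by
            exact Finset.sum_congr rfl fun j _ => by rw [← hsplit j]; ring
      _ = 0 := hker i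
    rw [Finset.sum_sub_distrib] at this
    simp only [hbdef]
    omega
  obtain ⟨u, hu, huniq⟩ := hgen vp
  have hufeas := hu.1
  by_cases hup : u = vp
  · -- then c·vp < c·vm, take t = v
    have hvmne : vm ≠ u := by
      intro h
      apply hv
      funext j
      rw [hup] at h
      have h1 : vm j = vp j := congrFun h j
      have h2 := hsplit j
      show v j = 0
      omega
    have hlt : ∑ j, c j * (vp j : ℝ) < ∑ j, c j * (vm j : ℝ) := by
      rcases lt_or_ge (∑ j, c j * (vp j : ℝ)) (∑ j, c j * (vm j : ℝ)) with h | h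
      · exact h
      · exfalso
        apply hvmne
        apply huniq
        refine ⟨hbm, fun u' hu' => ?_⟩
        calc ∑ j, c j * (vm j : ℝ) ≤ ∑ j, c j * (vp j : ℝ) := h
        _ = ∑ j, c j * (u j : ℝ) := by rw [hup]
        _ ≤ ∑ j, c j * (u' j : ℝ) := hu.2 u' hu'
    refine ⟨v, hker, ?_, fun j h => by omega⟩
    have : ∑ j, c j * (v j : ℝ) = ∑ j, c j * (vp j : ℝ) - ∑ j, c j * (vm j : ℝ) := by
      rw [← Finset.sum_sub_distrib]
      exact Finset.sum_congr rfl fun j _ => by rw [← hsplit j]; push_cast; ring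
    rw [this]; linarith
  · -- u ≠ vp : c·u < c·vp, take t = u - vp
    have hlt : ∑ j, c j * (u j : ℝ) < ∑ j, c j * (vp j : ℝ) := by
      rcases lt_or_ge (∑ j, c j * (u j : ℝ)) (∑ j, c j * (vp j : ℝ)) with h | h
      · exact h
      · exfalso
        apply hup
        exact (huniq vp ⟨fun i => rfl, fun u' hu' => le_trans h (hu.2 u' hu')⟩).symm
    refine ⟨fun j => (u j : ℤ) - (vp j : ℤ), ?_, ?_, ?_⟩
    · intro i
      have h1 : ∑ j, A i j * ((u j : ℕ) : ℤ) = b i := hufeas i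
      have : ∑ j, (A i j * (u j : ℤ) - A i j * (vp j : ℤ)) =
          ∑ j, A i j * ((u j : ℤ) - (vp j : ℤ)) := by
        exact Finset.sum_congr rfl fun j _ => by ring
      rw [← this, Finset.sum_sub_distrib, h1, hbdef]
      ring
    · have : ∑ j, c j * (((u j : ℤ) - (vp j : ℤ) : ℤ) : ℝ) =
          ∑ j, c j * (u j : ℝ) - ∑ j, c j * (vp j : ℝ) := by
        rw [← Finset.sum_sub_distrib]
        exact Finset.sum_congr rfl fun j _ => by push_cast; ring
      rw [this]; linarith
    · intro j h
      have h' : (u j : ℤ) - (vp j : ℤ) < 0 := h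
      have h2 : vp j = (v j).toNat := rfl
      omega
end


section lemB
variable {d n : ℕ} {A : Matrix (Fin d) (Fin n) ℤ} {c : Fin n → ℝ}

variable (hgen : ∀ u0 : Fin n → ℕ,
      ∃! u : Fin n → ℕ, intOpt A c (fun i => ∑ j, A i j * (u0 j : ℤ)) u)
include hgen

lemma lemB : ∀ w : Fin n → ℝ, (∀ j, 0 ≤ w j) → (∀ i, ∑ j, (A i j : ℝ) * w j = 0) →
    0 ≤ ∑ j, c j * w j ∧ (w ≠ 0 → 0 < ∑ j, c j * w j) := by
  classical
  suffices H : ∀ k : ℕ, ∀ w : Fin n → ℝ, (Finset.univ.filter (fun j => w j ≠ 0)).card ≤ k →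
      (∀ j, 0 ≤ w j) → (∀ i, ∑ j, (A i j : ℝ) * w j = 0) →
      0 ≤ ∑ j, c j * w j ∧ (w ≠ 0 → 0 < ∑ j, c j * w j) by
    intro w h1 h2; exact H _ w le_rfl h1 h2
  intro k
  induction k with
  | zero =>
    intro w hcard hpos hker
    have hw0 : w = 0 := by
      funext j
      by_contra hj
      have hmem : j ∈ Finset.univ.filter (fun j => w j ≠ 0) := by
        simp only [Finset.mem_filter, Finset.mem_univ, true_and]; exact hj
      have := Finset.card_pos.mpr ⟨j, hmem⟩
      omega
    subst hw0
    simp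
  | succ k ih =>
    intro w hcard hpos hker
    by_cases hw0 : w = 0
    · subst hw0; simp
    suffices hstrict : 0 < ∑ j, c j * w j from ⟨le_of_lt hstrict, fun _ => hstrict⟩
    obtain ⟨v0, hv00, hv0ker, hv0supp⟩ := qdep A w hw0 hker
    obtain ⟨j1, hj1⟩ : ∃ j, v0 j ≠ (0 : Fin n → ℤ) j := Function.ne_iff.mp hv00
    simp only [Pi.zero_apply] at hj1
    set v : Fin n → ℤ := if 0 < v0 j1 then v0 else -v0 with hvdef
    have hvker : ∀ i, ∑ j, A i j * v j = 0 := by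
      intro i
      by_cases h : 0 < v0 j1
      · simp only [hvdef, if_pos h]; exact hv0ker i
      · simp only [hvdef, if_neg h, Pi.neg_apply, mul_neg]
        rw [Finset.sum_neg_distrib, hv0ker i, neg_zero]
    have hvsupp : ∀ j, v j ≠ 0 → w j ≠ 0 := by
      intro j hj
      apply hv0supp
      by_cases h : 0 < v0 j1
      · simpa only [hvdef, if_pos h] using hj
      · simp only [hvdef, if_neg h, Pi.neg_apply, neg_ne_zero] at hj; exact hj
    have hj1pos : 0 < v j1 := by
      by_cases h : 0 < v0 j1
      · simpa only [hvdef, if_pos h] using h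
      · simp only [hvdef, if_neg h, Pi.neg_apply]; omega
    have hvne : v ≠ 0 := by
      intro h
      rw [congrFun h j1] at hj1pos
      exact lt_irrefl _ hj1pos
    -- key construction: walk to the boundary in direction -v'
    have key : ∀ v' : Fin n → ℤ, (∀ i, ∑ j, A i j * v' j = 0) →
        (∀ j, v' j ≠ 0 → w j ≠ 0) → (∃ j, 0 < v' j) →
        ∃ t : ℝ, 0 < t ∧ (∀ j, 0 ≤ w j - t * (v' j : ℝ)) ∧
          (∀ i, ∑ j, (A i j : ℝ) * (w j - t * (v' j : ℝ)) = 0) ∧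
          (Finset.univ.filter (fun j => w j - t * (v' j : ℝ) ≠ 0)).card ≤ k ∧
          (∀ j, v' j = 0 → w j - t * (v' j : ℝ) = w j) := by
      intro v' hker' hsupp' hpos'
      obtain ⟨j0, hj0mem, hj0min⟩ := Finset.exists_min_image
        (Finset.univ.filter fun j => 0 < v' j) (fun j => w j / (v' j : ℝ))
        (by obtain ⟨j, hj⟩ := hpos'
            exact ⟨j, by simp only [Finset.mem_filter, Finset.mem_univ, true_and]; exact hj⟩)
      simp only [Finset.mem_filter, Finset.mem_univ, true_and] at hj0mem
      have hwj0 : 0 < w j0 := lt_of_le_of_ne (hpos j0) (Ne.symm (hsupp' j0 hj0mem.ne'))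
      have hvj0 : (0:ℝ) < ((v' j0 : ℤ) : ℝ) := by exact_mod_cast hj0mem
      set t := w j0 / ((v' j0 : ℤ) : ℝ) with htdef
      have ht : 0 < t := div_pos hwj0 hvj0
      have htv : t * ((v' j0 : ℤ) : ℝ) = w j0 := div_mul_cancel₀ _ (ne_of_gt hvj0)
      refine ⟨t, ht, ?_, ?_, ?_, ?_⟩
      · intro j
        rcases le_or_gt ((v' j : ℤ) : ℝ) 0 with h | h
        · nlinarith [hpos j, mul_nonneg ht.le (neg_nonneg.mpr h)]
        · have hjm : j ∈ Finset.univ.filter fun j => 0 < v' j := by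
            simp only [Finset.mem_filter, Finset.mem_univ, true_and]; exact_mod_cast h
          have := (le_div_iff₀ h).mp (hj0min j hjm)
          linarith
      · intro i
        have h1 : ∑ j, (A i j : ℝ) * ((v' j : ℤ) : ℝ) = 0 := by
          have := hker' i
          push_cast [← this]
          norm_cast
        have step : ∀ j, (A i j : ℝ) * (w j - t * (v' j : ℝ)) =
            (A i j : ℝ) * w j - t * ((A i j : ℝ) * (v' j : ℝ)) := fun j => by ring
        rw [Finset.sum_congr rfl fun j _ => step j, Finset.sum_sub_distrib, hker i,
          ← Finset.mul_sum, h1, mul_zero, sub_zero]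
      · have hj0w : j0 ∈ Finset.univ.filter (fun j => w j ≠ 0) := by
          simp only [Finset.mem_filter, Finset.mem_univ, true_and]
          exact ne_of_gt hwj0
        have hsub : Finset.univ.filter (fun j => w j - t * (v' j : ℝ) ≠ 0) ⊆
            (Finset.univ.filter (fun j => w j ≠ 0)).erase j0 := by
          intro j hj
          simp only [Finset.mem_filter, Finset.mem_univ, true_and] at hj
          rw [Finset.mem_erase]
          constructor
          · intro hjj0
            subst hjj0
            rw [htv] at hj
            simp at hj
          · simp only [Finset.mem_filter, Finset.mem_univ, true_and]
            intro hwj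
            apply hj
            have hv'j : v' j = 0 := by
              by_contra hne
              exact hsupp' j hne hwj
            rw [hwj, hv'j]
            simp
        have h1 := Finset.card_le_card hsub
        rw [Finset.card_erase_of_mem hj0w] at h1
        omega
      · intro j hj
        rw [hj]
        simp
    obtain ⟨t1, ht1, hw1pos, hw1ker, hw1card, -⟩ := key v hvker hvsupp ⟨j1, hj1pos⟩
    set w1 : Fin n → ℝ := fun j => w j - t1 * (v j : ℝ) with hw1def
    have hih1 := ih w1 hw1card hw1pos hw1ker
    by_cases hNg : ∃ j, v j < 0
    · -- mixed case
      obtain ⟨j2, hj2⟩ := hNg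
      obtain ⟨t2, ht2, hw2pos, hw2ker, hw2card, -⟩ := key (-v)
        (by intro i; simp only [Pi.neg_apply, mul_neg]
            rw [Finset.sum_neg_distrib, hvker i, neg_zero])
        (fun j hj => hvsupp j (by simpa using hj))
        ⟨j2, by simp only [Pi.neg_apply]; omega⟩
      set w2 : Fin n → ℝ := fun j => w j - t2 * (((-v) j : ℤ) : ℝ) with hw2def
      have hih2 := ih w2 hw2card hw2pos hw2ker
      have hsum : t2 * (∑ j, c j * w1 j) + t1 * (∑ j, c j * w2 j) =
          (t1 + t2) * ∑ j, c j * w j := by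
        rw [Finset.mul_sum, Finset.mul_sum, Finset.mul_sum, ← Finset.sum_add_distrib]
        refine Finset.sum_congr rfl fun j _ => ?_
        simp only [hw1def, hw2def, Pi.neg_apply, Int.cast_neg]
        ring
      have hne : w1 ≠ 0 ∨ w2 ≠ 0 := by
        by_contra hcon
        push_neg at hcon
        apply hvne
        funext j
        have e1 := congrFun hcon.1 j
        have e2 := congrFun hcon.2 j
        simp only [hw1def, hw2def, Pi.zero_apply, Pi.neg_apply, Int.cast_neg] at e1 e2
        have h12 : (t1 + t2) * ((v j : ℤ) : ℝ) = 0 := by nlinarith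
        have hz : ((v j : ℤ) : ℝ) = 0 :=
          (mul_eq_zero.mp h12).resolve_left (by positivity)
        simpa using hz
      have hpos12 : 0 < t1 + t2 := by linarith
      by_contra hX
      push_neg at hX
      rcases hne with h | h
      · nlinarith [hih1.2 h, hih2.1]
      · nlinarith [hih2.2 h, hih1.1]
    · -- v is nonnegative
      push_neg at hNg
      set vn : Fin n → ℕ := fun j => (v j).toNat with hvndef
      have hvn : ∀ j, ((vn j : ℕ) : ℤ) = v j := fun j => Int.toNat_of_nonneg (hNg j)
      have hcv : 0 < ∑ j, c j * ((v j : ℤ) : ℝ) := by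
        rcases lt_or_ge 0 (∑ j, c j * ((v j : ℤ) : ℝ)) with h | h
        · exact h
        · exfalso
          apply hvne
          have h0 := stepA A c hgen vn
            (by intro i
                rw [Finset.sum_congr rfl fun j _ => by rw [hvn j]]
                exact hvker i)
            (by rw [Finset.sum_congr rfl fun j (_ : j ∈ Finset.univ) =>
                  show c j * ((vn j : ℕ) : ℝ) = c j * ((v j : ℤ) : ℝ) by
                    congr 1; exact_mod_cast congrArg (Int.cast : ℤ → ℝ) (hvn j)]
                exact h)
          funext j
          have h1 := congrFun h0 j
          simp only [Pi.zero_apply] at h1 ⊢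
          have h2 : ((vn j : ℕ) : ℤ) = v j := hvn j
          omega
      have hsum : ∑ j, c j * w j = ∑ j, c j * w1 j + t1 * ∑ j, c j * ((v j : ℤ) : ℝ) := by
        rw [Finset.mul_sum, ← Finset.sum_add_distrib]
        refine Finset.sum_congr rfl fun j _ => ?_
        simp only [hw1def]
        ring
      nlinarith [hih1.1, mul_pos ht1 hcv]
end lemB

section exist
variable {d n : ℕ} {A : Matrix (Fin d) (Fin n) ℤ} {c : Fin n → ℝ}

variable (hgen : ∀ u0 : Fin n → ℕ,
      ∃! u : Fin n → ℕ, intOpt A c (fun i => ∑ j, A i j * (u0 j : ℤ)) u)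
include hgen

lemma lemE : ∃ m : ℝ, 0 < m ∧ ∃ δ : ℝ, 0 < δ ∧ ∀ w : Fin n → ℝ, (∀ j, 0 ≤ w j) →
    ∑ j, w j = 1 → (∀ i, |∑ j, (A i j : ℝ) * w j| ≤ δ) → m ≤ ∑ j, c j * w j := by
  by_contra hcon
  push_neg at hcon
  have hseq : ∀ k : ℕ, ∃ w : Fin n → ℝ, w ∈ stdSimplex ℝ (Fin n) ∧
      (∀ i, |∑ j, (A i j : ℝ) * w j| ≤ (1:ℝ)/(k+1)) ∧ ∑ j, c j * w j < (1:ℝ)/(k+1) := by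
    intro k
    obtain ⟨w, h1, h2, h3, h4⟩ := hcon ((1:ℝ)/(k+1)) (by positivity) ((1:ℝ)/(k+1)) (by positivity)
    exact ⟨w, ⟨h1, h2⟩, h3, h4⟩
  choose w hw1 hw2 hw3 using hseq
  obtain ⟨l, hl_mem, φ, hφ, hlim⟩ := (isCompact_stdSimplex ℝ (Fin n)).tendsto_subseq hw1
  have hcont : ∀ g : Fin n → ℝ, Continuous fun x : Fin n → ℝ => ∑ j, g j * x j :=
    fun g => continuous_finset_sum _ (fun j _ => continuous_const.mul (continuous_apply j))
  have hfrac : Filter.Tendsto (fun k : ℕ => (1:ℝ)/(φ k + 1)) Filter.atTop (nhds 0) := by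
    apply squeeze_zero (fun k => by positivity) (fun k => ?_)
      tendsto_one_div_add_atTop_nhds_zero_nat
    have : (k:ℝ) ≤ (φ k : ℝ) := by exact_mod_cast hφ.le_apply
    apply div_le_div_of_nonneg_left (by norm_num) (by positivity)
    push_cast
    linarith
  have hker_l : ∀ i, ∑ j, (A i j : ℝ) * l j = 0 := by
    intro i
    have ht1 : Filter.Tendsto (fun k => ∑ j, (A i j : ℝ) * (w (φ k)) j) Filter.atTop
        (nhds (∑ j, (A i j : ℝ) * l j)) := ((hcont _).tendsto l).comp hlim
    have ht2 : Filter.Tendsto (fun k => ∑ j, (A i j : ℝ) * (w (φ k)) j) Filter.atTop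
        (nhds 0) := squeeze_zero_norm (fun k => hw2 (φ k) i) hfrac
    exact tendsto_nhds_unique ht1 ht2
  have hcl : ∑ j, c j * l j ≤ 0 := by
    have ht1 : Filter.Tendsto (fun k => ∑ j, c j * (w (φ k)) j) Filter.atTop
        (nhds (∑ j, c j * l j)) := ((hcont _).tendsto l).comp hlim
    exact le_of_tendsto_of_tendsto ht1 hfrac
      (Filter.Eventually.of_forall fun k => (hw3 (φ k)).le)
  have hl0 : l ≠ 0 := by
    intro h
    have := hl_mem.2
    rw [h] at this
    simp at this
  have := (lemB hgen l hl_mem.1 hker_l).2 hl0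
  linarith

lemma lpExists (b : Fin d → ℝ) (x0 : Fin n → ℝ) (hx0 : feas A b x0) :
    ∃ x, lpOpt A c b x := by
  obtain ⟨m, hm, δ, hδ, hE⟩ := lemE hgen
  set R : ℝ := max 1 (max ((∑ i, |b i|)/δ) ((|∑ j, c j * x0 j| + 1)/m)) with hRdef
  set S : Set (Fin n → ℝ) :=
    {x | feas A b x ∧ ∑ j, c j * x j ≤ ∑ j, c j * x0 j} with hSdef
  have hcont : ∀ g : Fin n → ℝ, Continuous fun x : Fin n → ℝ => ∑ j, g j * x j :=
    fun g => continuous_finset_sum _ (fun j _ => continuous_const.mul (continuous_apply j))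
  have hbound : ∀ x ∈ S, ∀ j, x j ≤ R := by
    intro x hx j
    obtain ⟨⟨hxpos, hxker⟩, hxle⟩ := hx
    set s := ∑ j, x j with hsdef
    have hxj : x j ≤ s := Finset.single_le_sum (fun j _ => hxpos j) (Finset.mem_univ j)
    have hsR : s ≤ R := by
      by_contra hsc
      push_neg at hsc
      have hR1 : (1:ℝ) ≤ R := le_max_left _ _
      have hs0 : 0 < s := by linarith
      have hw : ∀ j, 0 ≤ x j / s := fun j => div_nonneg (hxpos j) hs0.le
      have hw1 : ∑ j, x j / s = 1 := by
        rw [← Finset.sum_div, ← hsdef]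
        exact div_self (ne_of_gt hs0)
      have hwA : ∀ i, |∑ j, (A i j : ℝ) * (x j / s)| ≤ δ := by
        intro i
        have : ∑ j, (A i j : ℝ) * (x j / s) = b i / s := by
          rw [← hxker i, Finset.sum_div]
          exact Finset.sum_congr rfl fun j _ => by ring
        rw [this, abs_div, abs_of_pos hs0]
        have h1 : |b i| ≤ ∑ i, |b i| := Finset.single_le_sum (fun i _ => abs_nonneg (b i))
          (Finset.mem_univ i)
        have h2 : (∑ i, |b i|)/δ ≤ R := le_trans (le_max_left _ _) (le_max_right _ _)
        rw [div_le_iff₀ hs0]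
        have h2' : (∑ i, |b i|) ≤ R * δ := (div_le_iff₀ hδ).mp h2
        nlinarith [mul_lt_mul_of_pos_right hsc hδ]
      have hmle := hE (fun j => x j / s) hw hw1 hwA
      have hsum : ∑ j, c j * (x j / s) = (∑ j, c j * x j) / s := by
        rw [Finset.sum_div]
        exact Finset.sum_congr rfl fun j _ => by ring
      rw [hsum, le_div_iff₀ hs0] at hmle
      have h3 : (|∑ j, c j * x0 j| + 1)/m ≤ R := le_trans (le_max_right _ _) (le_max_right _ _)
      rw [div_le_iff₀ hm] at h3
      have h4 : ∑ j, c j * x0 j ≤ |∑ j, c j * x0 j| := le_abs_self _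
      nlinarith
    linarith
  have hSclosed : IsClosed S := by
    have h1 : IsClosed {x : Fin n → ℝ | ∀ j, 0 ≤ x j} := by
      rw [Set.setOf_forall]
      exact isClosed_iInter fun j => isClosed_le continuous_const (continuous_apply j)
    have h2 : IsClosed {x : Fin n → ℝ | ∀ i, ∑ j, (A i j : ℝ) * x j = b i} := by
      rw [Set.setOf_forall]
      exact isClosed_iInter fun i => isClosed_eq (hcont _) continuous_const
    have h3 : IsClosed {x : Fin n → ℝ | ∑ j, c j * x j ≤ ∑ j, c j * x0 j} :=
      isClosed_le (hcont _) continuous_const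
    have : S = ({x : Fin n → ℝ | ∀ j, 0 ≤ x j} ∩
        {x : Fin n → ℝ | ∀ i, ∑ j, (A i j : ℝ) * x j = b i}) ∩
        {x : Fin n → ℝ | ∑ j, c j * x j ≤ ∑ j, c j * x0 j} := by
      ext x
      simp only [hSdef, Set.mem_setOf_eq, Set.mem_inter_iff, feas]
      try tauto
    rw [this]
    exact ((h1.inter h2).inter h3)
  have hScpt : IsCompact S := by
    apply IsCompact.of_isClosed_subset
      (isCompact_Icc (a := (0 : Fin n → ℝ)) (b := fun _ => R)) hSclosed
    intro x hx
    exact ⟨fun j => hx.1.1 j, fun j => hbound x hx j⟩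
  have hx0S : x0 ∈ S := ⟨hx0, le_refl _⟩
  obtain ⟨xm, hxmS, hxmmin⟩ := hScpt.exists_isMinOn ⟨x0, hx0S⟩ ((hcont c).continuousOn)
  refine ⟨xm, hxmS.1, ?_⟩
  intro y hy
  rcases le_or_gt (∑ j, c j * y j) (∑ j, c j * x0 j) with h | h
  · exact hxmmin ⟨hy, h⟩
  · exact le_trans (hxmmin hx0S) h.le
end exist

section uniq
variable {d n : ℕ} {A : Matrix (Fin d) (Fin n) ℤ} {c : Fin n → ℝ}

variable (hgen : ∀ u0 : Fin n → ℕ,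
      ∃! u : Fin n → ℕ, intOpt A c (fun i => ∑ j, A i j * (u0 j : ℤ)) u)
include hgen

lemma lpUnique (b : Fin d → ℝ) (x y : Fin n → ℝ) (hx : lpOpt A c b x)
    (hy : lpOpt A c b y) : x = y := by
  classical
  by_contra hne
  have hval : ∑ j, c j * x j = ∑ j, c j * y j := le_antisymm (hx.2 y hy.1) (hy.2 x hx.1)
  set z : Fin n → ℝ := fun j => (x j + y j)/2 with hzdef
  have hzpos0 : ∀ j, 0 ≤ z j := fun j => by
    have := hx.1.1 j; have := hy.1.1 j
    simp only [hzdef]; linarith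
  have hzfeas : feas A b z := by
    refine ⟨hzpos0, fun i => ?_⟩
    have h1 := hx.1.2 i
    have h2 := hy.1.2 i
    have : ∀ j, (A i j : ℝ) * z j = ((A i j : ℝ) * x j + (A i j : ℝ) * y j)/2 := by
      intro j; simp only [hzdef]; ring
    rw [Finset.sum_congr rfl fun j _ => this j, ← Finset.sum_div, Finset.sum_add_distrib,
      h1, h2]
    ring
  have hzval : ∑ j, c j * z j = ∑ j, c j * x j := by
    have : ∀ j, c j * z j = (c j * x j + c j * y j)/2 := by
      intro j; simp only [hzdef]; ring
    rw [Finset.sum_congr rfl fun j _ => this j, ← Finset.sum_div, Finset.sum_add_distrib,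
      ← hval]
    ring
  set w : Fin n → ℝ := fun j => x j - y j with hwdef
  have hwne : w ≠ 0 := by
    intro h
    apply hne
    funext j
    have := congrFun h j
    simp only [hwdef, Pi.zero_apply] at this
    linarith
  have hwker : ∀ i, ∑ j, (A i j : ℝ) * w j = 0 := by
    intro i
    have h1 := hx.1.2 i
    have h2 := hy.1.2 i
    have : ∀ j, (A i j : ℝ) * w j = (A i j : ℝ) * x j - (A i j : ℝ) * y j := by
      intro j; simp only [hwdef]; ring
    rw [Finset.sum_congr rfl fun j _ => this j, Finset.sum_sub_distrib, h1, h2, sub_self]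
  obtain ⟨v, hv0, hvker, hvsupp⟩ := qdep A w hwne hwker
  have hzpos : ∀ j, v j ≠ 0 → 0 < z j := by
    intro j hj
    have hwj : w j ≠ 0 := hvsupp j hj
    refine lt_of_le_of_ne (hzpos0 j) (Ne.symm ?_)
    intro h0
    apply hwj
    have hxj := hx.1.1 j; have hyj := hy.1.1 j
    simp only [hzdef] at h0
    simp only [hwdef]
    linarith
  obtain ⟨t, htker, htneg, htsupp⟩ := lemL1 A c hgen v hv0 hvker
  obtain ⟨ε, hε0, hεle⟩ : ∃ ε : ℝ, 0 < ε ∧ ∀ j, t j < 0 → ε * (-(t j : ℝ)) ≤ z j := by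
    by_cases hNe : (Finset.univ.filter (fun j => t j < 0)).Nonempty
    · obtain ⟨j0, hj0mem, hj0min⟩ := Finset.exists_min_image _
        (fun j => z j / (-(t j : ℝ))) hNe
      simp only [Finset.mem_filter, Finset.mem_univ, true_and] at hj0mem
      have htj0 : (0:ℝ) < -(t j0 : ℝ) := by
        rw [neg_pos]; exact_mod_cast hj0mem
      have hzj0 : 0 < z j0 := hzpos j0 (htsupp j0 hj0mem) |> fun h => h
      refine ⟨z j0 / (-(t j0 : ℝ)), div_pos hzj0 htj0, ?_⟩
      intro j hj
      have hjm : j ∈ Finset.univ.filter (fun j => t j < 0) := by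
        simp only [Finset.mem_filter, Finset.mem_univ, true_and]; exact hj
      have h1 := hj0min j hjm
      have htj : (0:ℝ) < -(t j : ℝ) := by rw [neg_pos]; exact_mod_cast hj
      calc z j0 / (-(t j0:ℝ)) * (-(t j:ℝ)) ≤ z j / (-(t j:ℝ)) * (-(t j:ℝ)) := by
            exact mul_le_mul_of_nonneg_right h1 htj.le
      _ = z j := div_mul_cancel₀ _ (ne_of_gt htj)
    · refine ⟨1, one_pos, fun j hj => absurd ⟨j, ?_⟩ hNe⟩
      simp only [Finset.mem_filter, Finset.mem_univ, true_and]; exact hj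
  set x' : Fin n → ℝ := fun j => z j + ε * (t j : ℝ) with hx'def
  have hx'feas : feas A b x' := by
    constructor
    · intro j
      rcases lt_or_ge (t j) 0 with h | h
      · have := hεle j h
        simp only [hx'def]
        linarith
      · have h1 : (0:ℝ) ≤ (t j : ℝ) := by exact_mod_cast h
        have := hzpos0 j
        simp only [hx'def]
        nlinarith
    · intro i
      have h1 := hzfeas.2 i
      have h2 : ∑ j, (A i j : ℝ) * (t j : ℝ) = 0 := by exact_mod_cast htker i
      have : ∀ j, (A i j : ℝ) * x' j = (A i j : ℝ) * z j + ε * ((A i j : ℝ) * (t j:ℝ)) := by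
        intro j; simp only [hx'def]; ring
      rw [Finset.sum_congr rfl fun j _ => this j, Finset.sum_add_distrib, h1,
        ← Finset.mul_sum, h2, mul_zero, add_zero]
  have hcx' : ∑ j, c j * x' j < ∑ j, c j * x j := by
    have : ∀ j, c j * x' j = c j * z j + ε * (c j * (t j:ℝ)) := by
      intro j; simp only [hx'def]; ring
    rw [Finset.sum_congr rfl fun j _ => this j, Finset.sum_add_distrib, ← Finset.mul_sum,
      hzval]
    nlinarith [mul_neg_of_pos_of_neg hε0 htneg]
  exact absurd (hx.2 x' hx'feas) (not_le.mpr hcx')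
end uniq

section cell
variable {d n : ℕ} {A : Matrix (Fin d) (Fin n) ℤ} {c : Fin n → ℝ}

variable (hgen : ∀ u0 : Fin n → ℕ,
      ∃! u : Fin n → ℕ, intOpt A c (fun i => ∑ j, A i j * (u0 j : ℤ)) u)
include hgen

lemma cellIndep (σ : Finset (Fin n)) (hcell : isCell A c σ) :
    LinearIndependent ℝ (fun j : {j : Fin n // j ∈ σ} => (fun i => (A i j.1 : ℝ))) := by
  classical
  obtain ⟨z, hzeq, hzlt⟩ := hcell
  rw [Fintype.linearIndependent_iff]
  intro g hg jj
  by_contra hgj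
  set w : Fin n → ℝ := fun j => if h : j ∈ σ then g ⟨j, h⟩ else 0 with hwdef
  have hwne : w ≠ 0 := by
    intro h
    apply hgj
    have := congrFun h jj.1
    simpa only [hwdef, Pi.zero_apply, dif_pos jj.2] using this
  have hwker : ∀ i, ∑ j, (A i j : ℝ) * w j = 0 := by
    intro i
    have hgi := congrFun hg i
    rw [Finset.sum_apply] at hgi
    simp only [Pi.smul_apply, smul_eq_mul, Pi.zero_apply] at hgi
    calc ∑ j, (A i j : ℝ) * w j = ∑ j ∈ σ, (A i j : ℝ) * w j := by
          refine (Finset.sum_subset σ.subset_univ fun j _ hj => ?_).symm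
          simp only [hwdef, dif_neg hj, mul_zero]
    _ = ∑ j : {j : Fin n // j ∈ σ}, (A i j.1 : ℝ) * w j.1 :=
          (Finset.sum_coe_sort σ (fun j => (A i j : ℝ) * w j)).symm
    _ = 0 := by
          rw [← hgi]
          refine Finset.sum_congr rfl fun j _ => ?_
          simp only [hwdef, dif_pos j.2]
          ring
  obtain ⟨v, hv0, hvker, hvsupp⟩ := qdep A w hwne hwker
  have hvσ : ∀ j, v j ≠ 0 → j ∈ σ := by
    intro j hj
    by_contra hjσ
    exact hvsupp j hj (by simp only [hwdef, dif_neg hjσ])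
  -- positive and negative parts
  set vp : Fin n → ℕ := fun j => (v j).toNat with hvpdef
  set vm : Fin n → ℕ := fun j => (-(v j)).toNat with hvmdef
  have hsplit : ∀ j, (vp j : ℤ) - (vm j : ℤ) = v j := by
    intro j; simp only [hvpdef, hvmdef]; omega
  set b : Fin d → ℤ := fun i => ∑ j, A i j * ((vp j : ℕ) : ℤ) with hbdef
  have hbm : ∀ i, ∑ j, A i j * ((vm j : ℕ) : ℤ) = b i := by
    intro i
    have h1 : ∑ j, (A i j * (vp j : ℤ) - A i j * (vm j : ℤ)) = 0 := by
      calc ∑ j, (A i j * (vp j : ℤ) - A i j * (vm j : ℤ)) = ∑ j, A i j * v j :=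
            Finset.sum_congr rfl fun j _ => by rw [← hsplit j]; ring
      _ = 0 := hvker i
    rw [Finset.sum_sub_distrib] at h1
    simp only [hbdef]
    omega
  -- cost decomposition
  have key1 : ∀ u : Fin n → ℕ, ∑ j, c j * (u j : ℝ) =
      (∑ i, z i * (∑ j, (A i j : ℝ) * (u j : ℝ))) +
      ∑ j, (c j - ∑ i, z i * (A i j : ℝ)) * (u j : ℝ) := by
    intro u
    have hswap : ∑ i, z i * (∑ j, (A i j : ℝ) * (u j : ℝ)) =
        ∑ j, (∑ i, z i * (A i j : ℝ)) * (u j : ℝ) := by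
      calc ∑ i, z i * (∑ j, (A i j : ℝ) * (u j : ℝ))
          = ∑ i, ∑ j, z i * ((A i j : ℝ) * (u j : ℝ)) := by
            exact Finset.sum_congr rfl fun i _ => Finset.mul_sum _ _ _
      _ = ∑ j, ∑ i, z i * ((A i j : ℝ) * (u j : ℝ)) := Finset.sum_comm
      _ = ∑ j, (∑ i, z i * (A i j : ℝ)) * (u j : ℝ) := by
            refine Finset.sum_congr rfl fun j _ => ?_
            rw [Finset.sum_mul]
            exact Finset.sum_congr rfl fun i _ => by ring
    rw [hswap, ← Finset.sum_add_distrib]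
    exact Finset.sum_congr rfl fun j _ => by ring
  -- the real row sums of a feasible point equal (b i : ℝ)
  have hfeasR : ∀ u : Fin n → ℕ, (∀ i, ∑ j, A i j * ((u j : ℕ) : ℤ) = b i) →
      ∀ i, ∑ j, (A i j : ℝ) * (u j : ℝ) = ((b i : ℤ) : ℝ) := by
    intro u hu i
    exact_mod_cast congrArg (Int.cast : ℤ → ℝ) (hu i)
  -- optimality of any feasible point supported in σ
  have hopt : ∀ u : Fin n → ℕ, (∀ i, ∑ j, A i j * ((u j : ℕ) : ℤ) = b i) →
      (∀ j, u j ≠ 0 → j ∈ σ) →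
      intOpt A c b u := by
    intro u hu husupp
    refine ⟨hu, fun u' hu' => ?_⟩
    have h1 : ∑ j, c j * (u j : ℝ) = ∑ i, z i * ((b i : ℤ) : ℝ) := by
      rw [key1 u]
      have hb' : ∑ i, z i * (∑ j, (A i j : ℝ) * (u j : ℝ)) = ∑ i, z i * ((b i : ℤ) : ℝ) :=
        Finset.sum_congr rfl fun i _ => by rw [hfeasR u hu i]
      rw [hb']
      have : ∑ j, (c j - ∑ i, z i * (A i j : ℝ)) * (u j : ℝ) = 0 := by
        refine Finset.sum_eq_zero fun j _ => ?_
        by_cases hj : u j = 0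
        · rw [hj]; simp
        · rw [hzeq j (husupp j hj), sub_self, zero_mul]
      rw [this, add_zero]
    have h2 : ∑ i, z i * ((b i : ℤ) : ℝ) ≤ ∑ j, c j * (u' j : ℝ) := by
      rw [key1 u']
      have hb' : ∑ i, z i * (∑ j, (A i j : ℝ) * (u' j : ℝ)) = ∑ i, z i * ((b i : ℤ) : ℝ) :=
        Finset.sum_congr rfl fun i _ => by rw [hfeasR u' hu' i]
      rw [hb']
      have : 0 ≤ ∑ j, (c j - ∑ i, z i * (A i j : ℝ)) * (u' j : ℝ) := by
        refine Finset.sum_nonneg fun j _ => ?_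
        refine mul_nonneg ?_ (by positivity)
        by_cases hj : j ∈ σ
        · rw [hzeq j hj, sub_self]
        · linarith [hzlt j hj]
      linarith
    rw [h1]
    exact h2
  obtain ⟨u, hu, huniq⟩ := hgen vp
  have hvpopt : intOpt A c b vp := hopt vp (fun i => rfl) (fun j hj => hvσ j (by
    simp only [hvpdef] at hj
    omega))
  have hvmopt : intOpt A c b vm := hopt vm hbm (fun j hj => hvσ j (by
    simp only [hvmdef] at hj
    omega))
  have he1 : vp = u := huniq vp hvpopt
  have he2 : vm = u := huniq vm hvmopt
  apply hv0
  funext j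
  have : vp j = vm j := by rw [he1, he2]
  have h2 := hsplit j
  simp only [Pi.zero_apply]
  omega
end cell

theorem stmt15 {d n : ℕ} (A : Matrix (Fin d) (Fin n) ℤ) (c : Fin n → ℝ)
    (hlat : ∀ v : Fin d → ℤ, ∃ u : Fin n → ℤ, ∀ i, ∑ j, A i j * u j = v i)
    -- c is generic: every feasible IP has a unique optimal solution
    (hgen : ∀ u0 : Fin n → ℕ,
      ∃! u : Fin n → ℕ, intOpt A c (fun i => ∑ j, A i j * (u0 j : ℤ)) u) :
    (∀ b : Fin d → ℝ, (∃ x, feas A b x) → ∃! x, lpOpt A c b x) ∧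
    ∀ σ : Finset (Fin n), isCell A c σ →
      LinearIndependent ℝ (fun j : {j : Fin n // j ∈ σ} => (fun i => (A i j.1 : ℝ))) := by
  constructor
  · intro b hb
    obtain ⟨x0, hx0⟩ := hb
    obtain ⟨x, hx⟩ := lpExists hgen b x0 hx0
    exact ⟨x, hx, fun y hy => lpUnique hgen b y x hy hx⟩
  · intro σ hσ
    exact cellIndep hgen σ hσ
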